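/- Let S be an η-sparse family of cubes (0 < η < 1) in a dyadic grid, 1 < p ≤ 2, and let u, v be weights. Suppose B is a Young function with B̄ ∈ B_p (i.e., ∫_1^∞ B̄(t)/t^p · dt/t < ∞) and the pair (u,v) satisfies K := sup_Q ‖u^{1/p}‖_{p,Q} ‖v^{−1/p}‖_{B,Q} < ∞. Then the sparse square operator A_S²f(x) = (∑_{Q ∈ S} (⨍_Q |f|)² 𝟙_Q(x))^{1/2} satisfies ‖A_S² f‖_{L^p(u)} ≲ K · ‖M_{B̄}‖_{L^p→L^p} · ‖f‖_{L^p(v)}. -/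

import Mathlib

open Set Filter MeasureTheory
open scoped ENNReal

noncomputable section

/-- A Young function. -/
def IsYoung (Φ : ℝ → ℝ) : Prop :=
  ContinuousOn Φ (Set.Ici 0) ∧ ConvexOn ℝ (Set.Ici 0) Φ ∧
  StrictMonoOn Φ (Set.Ici 0) ∧ (∀ t ∈ Set.Ici (0:ℝ), 0 ≤ Φ t) ∧
  Filter.Tendsto (fun t => Φ t / t) (nhdsWithin 0 (Set.Ioi 0)) (nhds 0) ∧
  Filter.Tendsto (fun t => Φ t / t) Filter.atTop Filter.atTop

/-- The complementary Young function. -/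
def youngConj (Φ : ℝ → ℝ) (t : ℝ) : ℝ := sSup {y : ℝ | ∃ s > 0, y = s * t - Φ s}

/-- Extension of a Young function to `ℝ≥0∞`. -/
def eOrl (Φ : ℝ → ℝ) (z : ℝ≥0∞) : ℝ≥0∞ :=
  if z = ⊤ then ⊤ else ENNReal.ofReal (Φ z.toReal)

/-- The normalized Luxemburg norm on a set. -/
def luxNorm {n : ℕ} (Φ : ℝ → ℝ) (s : Set (Fin n → ℝ)) (F : (Fin n → ℝ) → ℝ≥0∞) : ℝ≥0∞ :=
  sInf {l : ℝ≥0∞ | ∃ lam : ℝ, 0 < lam ∧ l = ENNReal.ofReal lam ∧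
    (∫⁻ x in s, eOrl Φ (F x / ENNReal.ofReal lam)) ≤ volume s}

/-- The Orlicz maximal operator `M_Φ F(x) = sup_{Q ∋ x} ‖F‖_{Φ,Q}` over cubes
(closed balls in the sup norm). -/
def orlMax {n : ℕ} (Φ : ℝ → ℝ) (F : (Fin n → ℝ) → ℝ≥0∞) (x : Fin n → ℝ) : ℝ≥0∞ :=
  ⨆ (c : Fin n → ℝ) (r : ℝ) (_ : 0 < r) (_ : x ∈ Metric.closedBall c r),
    luxNorm Φ (Metric.closedBall c r) F

/-- The sparse square operator `A_S² f = (∑_{Q ∈ S} ⟨|f|⟩_Q² 𝟙_Q)^{1/2}`. -/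
def sparseSq {n : ℕ} {ι : Type} (Qc : ι → Fin n → ℝ) (Qr : ι → ℝ)
    (f : (Fin n → ℝ) → ℝ) (x : Fin n → ℝ) : ℝ≥0∞ :=
  (∑' i, Set.indicator (Metric.closedBall (Qc i) (Qr i))
      (fun _ => ((volume (Metric.closedBall (Qc i) (Qr i)))⁻¹ *
        ∫⁻ y in Metric.closedBall (Qc i) (Qr i), ENNReal.ofReal |f y|) ^ 2) x) ^ (1/2 : ℝ)

section Aux

variable {B : ℝ → ℝ}

lemma young_nonneg (hB : IsYoung B) {t : ℝ} (ht : 0 ≤ t) : 0 ≤ B t := hB.2.2.2.1 t ht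

lemma young_mono (hB : IsYoung B) : MonotoneOn B (Set.Ici 0) := hB.2.2.1.monotoneOn

lemma young_bddAbove (hB : IsYoung B) {t : ℝ} (ht : 0 ≤ t) :
    BddAbove {y : ℝ | ∃ s > 0, y = s * t - B s} := by
  obtain ⟨S, hS⟩ := (Filter.tendsto_atTop.1 hB.2.2.2.2.2 t).exists_forall_of_atTop
  refine ⟨max S 1 * t, ?_⟩
  rintro y ⟨s, hs, rfl⟩
  rcases le_or_gt s (max S 1) with h | h
  · have hBnn : 0 ≤ B s := young_nonneg hB hs.le
    nlinarith [mul_le_mul_of_nonneg_right h ht]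
  · have hsS : S ≤ s := le_trans (le_max_left _ _) h.le
    have h1 : t ≤ B s / s := hS s hsS
    have hs0 : (0:ℝ) < s := hs
    have h2 : s * t ≤ B s := by
      rw [le_div_iff₀ hs0] at h1; nlinarith
    have : 0 ≤ max S 1 * t := mul_nonneg (le_trans zero_le_one (le_max_right _ _)) ht
    linarith

lemma young_set_nonempty (t : ℝ) :
    Set.Nonempty {y : ℝ | ∃ s > 0, y = s * t - B s} := ⟨1 * t - B 1, 1, one_pos, rfl⟩

lemma youngConj_nonneg (hB : IsYoung B) {t : ℝ} (ht : 0 ≤ t) : 0 ≤ youngConj B t := by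
  by_contra hcon
  push_neg at hcon
  set ε : ℝ := -(youngConj B t) / 2 with hε
  have hεpos : 0 < ε := by simp only [hε]; linarith
  have h5 := hB.2.2.2.2.1
  have h1 : ∀ᶠ s in nhdsWithin (0:ℝ) (Set.Ioi 0), B s / s < ε :=
    h5.eventually_lt_const hεpos
  have h2 : ∀ᶠ s in nhdsWithin (0:ℝ) (Set.Ioi 0), s ∈ Set.Ioi (0:ℝ) :=
    self_mem_nhdsWithin
  have h3 : ∀ᶠ s in nhdsWithin (0:ℝ) (Set.Ioi 0), s < 1 :=
    eventually_nhdsWithin_of_eventually_nhds (eventually_lt_nhds zero_lt_one)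
  obtain ⟨s, hsε, hs0, hs1⟩ := (h1.and (h2.and h3)).exists
  have hs0' : (0:ℝ) < s := hs0
  have hBs : B s < ε * s := by rwa [div_lt_iff₀ hs0'] at hsε
  have hle : s * t - B s ≤ youngConj B t := le_csSup (young_bddAbove hB ht) ⟨s, hs0', rfl⟩
  have hst : 0 ≤ s * t := mul_nonneg hs0'.le ht
  nlinarith


lemma young_ineq (hB : IsYoung B) {s t : ℝ} (hs : 0 ≤ s) (ht : 0 ≤ t) :
    s * t ≤ B s + youngConj B t := by
  rcases hs.lt_or_eq with hs' | hs'
  · have h : s * t - B s ≤ youngConj B t :=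
      le_csSup (young_bddAbove hB ht) ⟨s, hs', rfl⟩
    linarith
  · have h1 := young_nonneg hB (le_refl (0:ℝ))
    have h2 := youngConj_nonneg hB ht
    rw [← hs']
    simpa using by linarith

lemma youngConj_monoOn (hB : IsYoung B) : MonotoneOn (youngConj B) (Set.Ici 0) := by
  intro t₁ h₁ t₂ h₂ h12
  refine csSup_le (young_set_nonempty t₁) ?_
  rintro y ⟨s, hs, rfl⟩
  have : s * t₂ - B s ≤ youngConj B t₂ := le_csSup (young_bddAbove hB h₂) ⟨s, hs, rfl⟩
  nlinarith

lemma young_tendsto_atTop (hB : IsYoung B) : Tendsto B atTop atTop := by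
  have h := hB.2.2.2.2.2.atTop_mul_atTop₀ tendsto_id
  refine h.congr' ?_
  filter_upwards [eventually_ge_atTop (1:ℝ)] with t ht
  have : t ≠ 0 := by linarith
  field_simp
  rfl

lemma measurable_eOrl {Φ : ℝ → ℝ} (hΦ : MonotoneOn Φ (Set.Ici 0)) :
    Measurable (eOrl Φ) := by
  have hM : Monotone fun t : ℝ => Φ (max t 0) := fun a b hab =>
    hΦ (le_max_right a 0) (le_max_right b 0) (max_le_max hab le_rfl)
  have : eOrl Φ = fun z => if z = ⊤ then (⊤:ℝ≥0∞)
      else ENNReal.ofReal (Φ (max z.toReal 0)) := by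
    funext z
    rcases eq_or_ne z ⊤ with rfl | hz
    · simp [eOrl]
    · simp [eOrl, hz, max_eq_left ENNReal.toReal_nonneg]
  rw [this]
  exact Measurable.ite (by exact MeasurableSet.singleton ⊤) measurable_const
    (ENNReal.measurable_ofReal.comp (hM.measurable.comp ENNReal.measurable_toReal))

lemma eOrl_top (Φ : ℝ → ℝ) : eOrl Φ ⊤ = ⊤ := if_pos rfl

lemma eOrl_ne_top {Φ : ℝ → ℝ} {z : ℝ≥0∞} (hz : z ≠ ⊤) : eOrl Φ z ≠ ⊤ := by
  simp [eOrl, hz]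

lemma eOrl_mono {Φ : ℝ → ℝ} (hΦ : MonotoneOn Φ (Set.Ici 0)) {z w : ℝ≥0∞} (h : z ≤ w) :
    eOrl Φ z ≤ eOrl Φ w := by
  rcases eq_or_ne w ⊤ with rfl | hw
  · simp [eOrl_top]
  · have hz : z ≠ ⊤ := fun hz => hw (by rw [hz] at h; exact top_le_iff.1 h)
    simp only [eOrl, if_neg hz, if_neg hw]
    exact ENNReal.ofReal_le_ofReal
      (hΦ ENNReal.toReal_nonneg ENNReal.toReal_nonneg (ENNReal.toReal_mono hw h))

lemma eOrl_young (hB : IsYoung B) (a b : ℝ≥0∞) :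
    a * b ≤ eOrl B a + eOrl (youngConj B) b := by
  rcases eq_or_ne a ⊤ with rfl | ha
  · simp [eOrl_top]
  rcases eq_or_ne b ⊤ with rfl | hb
  · simp [eOrl_top]
  have h1 : a * b = ENNReal.ofReal (a.toReal * b.toReal) := by
    rw [ENNReal.ofReal_mul ENNReal.toReal_nonneg, ENNReal.ofReal_toReal ha,
      ENNReal.ofReal_toReal hb]
  rw [h1]
  simp only [eOrl, if_neg ha, if_neg hb]
  calc ENNReal.ofReal (a.toReal * b.toReal)
      ≤ ENNReal.ofReal (B a.toReal + youngConj B b.toReal) :=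
        ENNReal.ofReal_le_ofReal
          (young_ineq hB ENNReal.toReal_nonneg ENNReal.toReal_nonneg)
    _ = ENNReal.ofReal (B a.toReal) + ENNReal.ofReal (youngConj B b.toReal) :=
        ENNReal.ofReal_add (young_nonneg hB ENNReal.toReal_nonneg)
          (youngConj_nonneg hB ENNReal.toReal_nonneg)

lemma le_mul_sInf {X c : ℝ≥0∞} {S : Set ℝ≥0∞} (hc : c ≠ ⊤) (hS : S.Nonempty)
    (h : ∀ b ∈ S, X ≤ c * b) : X ≤ c * sInf S := by
  rcases eq_or_ne c 0 with rfl | hc0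
  · obtain ⟨b, hb⟩ := hS
    simpa using h b hb
  · have h1 : X / c ≤ sInf S := le_sInf fun b hb => by
      rw [ENNReal.div_le_iff_le_mul (Or.inl hc0) (Or.inl hc)]
      rw [mul_comm]
      exact h b hb
    calc X = X / c * c := (ENNReal.div_mul_cancel hc0 hc).symm
    _ ≤ sInf S * c := mul_le_mul_left h1 c
    _ = c * sInf S := mul_comm _ _

lemma tsum_rpow_le {ι : Type*} (g : ι → ℝ≥0∞) {q : ℝ} (hq0 : 0 < q) (hq1 : q ≤ 1) :
    (∑' i, g i) ^ q ≤ ∑' i, g i ^ q := by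
  have key : ∀ F : Finset ι, (∑ i ∈ F, g i) ^ q ≤ ∑ i ∈ F, g i ^ q := by
    intro F
    classical
    induction F using Finset.induction_on with
    | empty => simp [ENNReal.zero_rpow_of_pos hq0]
    | @insert a F' hnot ih =>
      rw [Finset.sum_insert hnot, Finset.sum_insert hnot]
      exact le_trans (ENNReal.rpow_add_le_add_rpow _ _ hq0.le hq1) (by gcongr)
  have h2 : ∑' i, g i ≤ (∑' i, g i ^ q) ^ (1 / q) := by
    rw [ENNReal.tsum_eq_iSup_sum]
    refine iSup_le fun F => ?_
    have : (∑ i ∈ F, g i) = ((∑ i ∈ F, g i) ^ q) ^ (1/q) := by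
      rw [← ENNReal.rpow_mul, mul_one_div_cancel hq0.ne', ENNReal.rpow_one]
    rw [this]
    refine ENNReal.rpow_le_rpow ?_ (by positivity)
    exact le_trans (key F) (ENNReal.sum_le_tsum F)
  calc (∑' i, g i) ^ q ≤ ((∑' i, g i ^ q) ^ (1/q)) ^ q := ENNReal.rpow_le_rpow h2 hq0.le
  _ = ∑' i, g i ^ q := by
    rw [← ENNReal.rpow_mul, one_div_mul_cancel hq0.ne', ENNReal.rpow_one]


lemma luxNorm_ne_zero {n : ℕ} {Φ : ℝ → ℝ} (hmono : MonotoneOn Φ (Set.Ici 0))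
    (htop : Tendsto Φ atTop atTop) {s : Set (Fin n → ℝ)} (hs : MeasurableSet s)
    (h0 : volume s ≠ 0) (hstop : volume s ≠ ⊤)
    {H : (Fin n → ℝ) → ℝ≥0∞} (hH : Measurable H) (hHpos : ∀ x, H x ≠ 0) :
    luxNorm Φ s H ≠ 0 := by
  intro hzero
  -- find a level set of H with positive measure
  have hcover : s ⊆ ⋃ m : ℕ, s ∩ {x | ((m:ℝ≥0∞))⁻¹ < H x} := by
    intro x hx
    obtain ⟨m, hm⟩ := ENNReal.exists_inv_nat_lt (hHpos x)
    exact Set.mem_iUnion.2 ⟨m, hx, hm⟩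
  have hexists : ∃ m : ℕ, volume (s ∩ {x | ((m:ℝ≥0∞))⁻¹ < H x}) ≠ 0 := by
    by_contra hall
    push_neg at hall
    apply h0
    refine le_antisymm ?_ zero_le
    calc volume s ≤ volume (⋃ m : ℕ, s ∩ {x | ((m:ℝ≥0∞))⁻¹ < H x}) := measure_mono hcover
    _ ≤ ∑' m : ℕ, volume (s ∩ {x | ((m:ℝ≥0∞))⁻¹ < H x}) := measure_iUnion_le _
    _ = 0 := by simp [hall]
  obtain ⟨m, hm⟩ := hexists
  set A := s ∩ {x | ((m:ℝ≥0∞))⁻¹ < H x} with hA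
  have hm0 : m ≠ 0 := by
    rintro rfl
    apply hm
    have : A = ∅ := by
      rw [hA]; ext x; simp
    rw [this, measure_empty]
  have hmpos : (0:ℝ) < m := by positivity
  have hAtop : volume A ≠ ⊤ :=
    fun h => hstop (top_le_iff.1 (h ▸ measure_mono Set.inter_subset_left))
  -- choose R with ofReal R * volume A > volume s
  set R : ℝ := (volume s / volume A).toReal + 1 with hR
  have hRb : volume s / volume A < ENNReal.ofReal R := by
    rw [ENNReal.lt_ofReal_iff_toReal_lt (ENNReal.div_lt_top hstop hm).ne]
    simp [hR]
  have hRA : volume s < ENNReal.ofReal R * volume A := by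
    calc volume s = volume s / volume A * volume A := (ENNReal.div_mul_cancel hm hAtop).symm
    _ < ENNReal.ofReal R * volume A := by
      exact ENNReal.mul_lt_mul_left hm hAtop hRb
  -- choose T with Φ t ≥ R for t ≥ T
  obtain ⟨T₀, hT₀⟩ := (Filter.tendsto_atTop.1 htop R).exists_forall_of_atTop
  set T : ℝ := max T₀ 1 with hT
  have hTpos : (0:ℝ) < T := lt_of_lt_of_le one_pos (le_max_right _ _)
  -- choose lam admissible with lam < 1/(m*T)
  have hlt : luxNorm Φ s H < ENNReal.ofReal (1/(m*T)) := by
    rw [hzero]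
    exact ENNReal.ofReal_pos.2 (by positivity)
  obtain ⟨l, hlmem, hllt⟩ := sInf_lt_iff.1 hlt
  obtain ⟨lam, hlam, rfl, hadm⟩ := hlmem
  have hlamlt : lam < 1/(m*T) := by
    rwa [ENNReal.ofReal_lt_ofReal_iff (by positivity)] at hllt
  have hTle : T ≤ 1/(m*lam) := by
    rw [le_div_iff₀ (by positivity)]
    rw [lt_div_iff₀ (by positivity)] at hlamlt
    nlinarith
  -- pointwise lower bound on A
  have hpoint : ∀ x ∈ A, ENNReal.ofReal R ≤ eOrl Φ (H x / ENNReal.ofReal lam) := by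
    intro x hx
    have hx2 : ((m:ℝ≥0∞))⁻¹ < H x := hx.2
    have hdiv : ENNReal.ofReal (1/(m*lam)) ≤ H x / ENNReal.ofReal lam := by
      have : ((m:ℝ≥0∞))⁻¹ / ENNReal.ofReal lam ≤ H x / ENNReal.ofReal lam :=
        ENNReal.div_le_div_right hx2.le _
      refine le_trans (le_of_eq ?_) this
      rw [← ENNReal.ofReal_natCast m, ← ENNReal.ofReal_inv_of_pos hmpos,
        ← ENNReal.ofReal_div_of_pos hlam]
      congr 1
      field_simp
    have h1 : ENNReal.ofReal (Φ (1/(m*lam))) ≤ eOrl Φ (H x / ENNReal.ofReal lam) := by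
      refine le_trans (le_of_eq ?_) (eOrl_mono hmono hdiv)
      simp only [eOrl, if_neg ENNReal.ofReal_ne_top]
      rw [ENNReal.toReal_ofReal (by positivity)]
    refine le_trans (ENNReal.ofReal_le_ofReal ?_) h1
    exact hT₀ _ (le_trans (le_max_left _ _) hTle)
  -- contradiction
  have hlower : ENNReal.ofReal R * volume A ≤ ∫⁻ x in s, eOrl Φ (H x / ENNReal.ofReal lam) := by
    have hAmeas : MeasurableSet {x : Fin n → ℝ | ((m:ℝ≥0∞))⁻¹ < H x} :=
      measurableSet_lt measurable_const hH
    calc ENNReal.ofReal R * volume A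
        = ∫⁻ _ in A, ENNReal.ofReal R := (setLIntegral_const A _).symm
    _ ≤ ∫⁻ x in A, eOrl Φ (H x / ENNReal.ofReal lam) := by
        refine lintegral_mono_ae ?_
        rw [ae_restrict_iff' (hs.inter hAmeas)]
        exact ae_of_all _ hpoint
    _ ≤ ∫⁻ x in s, eOrl Φ (H x / ENNReal.ofReal lam) :=
        lintegral_mono_set Set.inter_subset_left
  exact absurd (le_trans hlower hadm) (not_le.2 hRA)


lemma holder_core {n : ℕ} (hB : IsYoung B) {s : Set (Fin n → ℝ)}
    {G H : (Fin n → ℝ) → ℝ≥0∞} (hH : Measurable H)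
    {lam mu : ℝ} (hlam : 0 < lam) (hmu : 0 < mu)
    (h1 : (∫⁻ x in s, eOrl (youngConj B) (G x / ENNReal.ofReal lam)) ≤ volume s)
    (h2 : (∫⁻ x in s, eOrl B (H x / ENNReal.ofReal mu)) ≤ volume s) :
    (∫⁻ x in s, G x * H x) ≤ ENNReal.ofReal lam * ENNReal.ofReal mu * (2 * volume s) := by
  set a := ENNReal.ofReal lam with ha
  set b := ENNReal.ofReal mu with hb
  have ha0 : a ≠ 0 := (ENNReal.ofReal_pos.2 hlam).ne'
  have hat : a ≠ ⊤ := ENNReal.ofReal_ne_top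
  have hb0 : b ≠ 0 := (ENNReal.ofReal_pos.2 hmu).ne'
  have hbt : b ≠ ⊤ := ENNReal.ofReal_ne_top
  have hmono : MonotoneOn B (Set.Ici 0) := young_mono hB
  have hpoint : ∀ x, G x * H x ≤
      a * b * (eOrl B (H x / b) + eOrl (youngConj B) (G x / a)) := by
    intro x
    have hGx : G x = G x / a * a := (ENNReal.div_mul_cancel ha0 hat).symm
    have hHx : H x = H x / b * b := (ENNReal.div_mul_cancel hb0 hbt).symm
    calc G x * H x = a * b * ((H x / b) * (G x / a)) := by
          conv_lhs => rw [hGx, hHx]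
          ring
    _ ≤ a * b * (eOrl B (H x / b) + eOrl (youngConj B) (G x / a)) := by
          exact mul_le_mul_right (eOrl_young hB _ _) _
  calc (∫⁻ x in s, G x * H x)
      ≤ ∫⁻ x in s, a * b * (eOrl B (H x / b) + eOrl (youngConj B) (G x / a)) :=
        lintegral_mono hpoint
  _ = a * b * ∫⁻ x in s, (eOrl B (H x / b) + eOrl (youngConj B) (G x / a)) :=
        lintegral_const_mul' _ _ (by finiteness)
  _ = a * b * ((∫⁻ x in s, eOrl B (H x / b)) + ∫⁻ x in s, eOrl (youngConj B) (G x / a)) := by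
        rw [lintegral_add_left (f := fun x => eOrl B (H x / b))
          ((measurable_eOrl hmono).comp (hH.div_const b))]
  _ ≤ a * b * (volume s + volume s) := by
        exact mul_le_mul_right (add_le_add h2 h1) _
  _ = a * b * (2 * volume s) := by rw [two_mul]


lemma percube {n : ℕ} (hB : IsYoung B) {p : ℝ} (hp0 : 0 < p)
    {Q : Set (Fin n → ℝ)} (hQmeas : MeasurableSet Q) (hQ0 : volume Q ≠ 0) (hQt : volume Q ≠ ⊤)
    {f v : (Fin n → ℝ) → ℝ} (hv : Measurable v)
    {U K : ℝ≥0∞} (hKtop : K ≠ ⊤)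
    (hK : U ^ (1/p) * luxNorm B Q (fun x => (ENNReal.ofReal (v x)) ^ (-(1/p))) ≤ K) :
    ((volume Q)⁻¹ * ∫⁻ x in Q, ENNReal.ofReal |f x|) * U ^ (1/p) ≤
      2 * K * luxNorm (youngConj B) Q
        (fun x => ENNReal.ofReal |f x| * ENNReal.ofReal (v x) ^ (1/p : ℝ)) := by
  have hp' : (0:ℝ) < 1/p := by positivity
  set Hv : (Fin n → ℝ) → ℝ≥0∞ := fun x => (ENNReal.ofReal (v x)) ^ (-(1/p)) with hHv
  set G : (Fin n → ℝ) → ℝ≥0∞ :=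
    fun x => ENNReal.ofReal |f x| * ENNReal.ofReal (v x) ^ (1/p : ℝ) with hG
  have hHvMeas : Measurable Hv := (hv.ennreal_ofReal).pow_const _
  set L2 := luxNorm B Q Hv with hL2def
  set L1 := luxNorm (youngConj B) Q G with hL1def
  have hL2 : L2 ≠ 0 := by
    refine luxNorm_ne_zero (young_mono hB) (young_tendsto_atTop hB) hQmeas hQ0 hQt hHvMeas ?_
    intro x
    intro h
    rcases ENNReal.rpow_eq_zero_iff.1 h with ⟨-, hy⟩ | ⟨ht, -⟩
    · linarith
    · exact absurd ht ENNReal.ofReal_ne_top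
  by_cases hU0 : U = 0
  · rw [hU0, ENNReal.zero_rpow_of_pos hp', mul_zero]
    exact zero_le
  by_cases hK0 : K = 0
  · rw [hK0, le_zero_iff, mul_eq_zero] at hK
    rcases hK with h | h
    · exact absurd ((ENNReal.rpow_eq_zero_iff_of_pos hp').1 h) hU0
    · exact absurd h hL2
  have hUrpow0 : U ^ (1/p) ≠ 0 := fun h => hU0 ((ENNReal.rpow_eq_zero_iff_of_pos hp').1 h)
  have hUt : U ≠ ⊤ := by
    rintro rfl
    rw [ENNReal.top_rpow_of_pos hp', ENNReal.top_mul hL2] at hK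
    exact hKtop (top_le_iff.1 hK)
  have hUrpowt : U ^ (1/p) ≠ ⊤ := ENNReal.rpow_ne_top_of_nonneg hp'.le hUt
  have hL2t : L2 ≠ ⊤ := by
    intro h
    rw [h, ENNReal.mul_top hUrpow0] at hK
    exact hKtop (top_le_iff.1 hK)
  have hS2ne : {l : ℝ≥0∞ | ∃ lam : ℝ, 0 < lam ∧ l = ENNReal.ofReal lam ∧
      (∫⁻ x in Q, eOrl B (Hv x / ENNReal.ofReal lam)) ≤ volume Q}.Nonempty := by
    by_contra h
    rw [Set.not_nonempty_iff_eq_empty] at h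
    exact hL2t (by rw [hL2def, luxNorm, h, sInf_empty])
  by_cases hL1t : L1 = ⊤
  · rw [hL1t, ENNReal.mul_top (by simp [hK0])]
    exact le_top
  have hS1ne : {l : ℝ≥0∞ | ∃ lam : ℝ, 0 < lam ∧ l = ENNReal.ofReal lam ∧
      (∫⁻ x in Q, eOrl (youngConj B) (G x / ENNReal.ofReal lam)) ≤ volume Q}.Nonempty := by
    by_contra h
    rw [Set.not_nonempty_iff_eq_empty] at h
    exact hL1t (by rw [hL1def, luxNorm, h, sInf_empty])
  rw [hL1def, luxNorm]
  refine le_mul_sInf (ENNReal.mul_ne_top (by finiteness) hKtop) hS1ne ?_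
  rintro l ⟨lam, hlam, rfl, hadm1⟩
  have step : ((volume Q)⁻¹ * ∫⁻ x in Q, ENNReal.ofReal |f x|) * U ^ (1/p) ≤
      (2 * ENNReal.ofReal lam * U ^ (1/p)) * L2 := by
    rw [hL2def, luxNorm]
    refine le_mul_sInf (by finiteness) hS2ne ?_
    rintro b ⟨mu, hmu, rfl, hadm2⟩
    -- a.e. pointwise bound on Q
    have hint_ne_top : (∫⁻ x in Q, eOrl B (Hv x / ENNReal.ofReal mu)) ≠ ⊤ :=
      fun h => hQt (top_le_iff.1 (h ▸ hadm2))
    have hmeas2 : Measurable fun x => eOrl B (Hv x / ENNReal.ofReal mu) :=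
      (measurable_eOrl (young_mono hB)).comp (hHvMeas.div_const _)
    have hae : ∀ᵐ x ∂(volume.restrict Q), ENNReal.ofReal |f x| ≤ G x * Hv x := by
      filter_upwards [ae_lt_top hmeas2 hint_ne_top] with x hx
      have hHvt : Hv x ≠ ⊤ := by
        intro hh
        rw [hh, ENNReal.top_div_of_ne_top ENNReal.ofReal_ne_top, eOrl_top] at hx
        exact absurd hx (lt_irrefl _)
      have hv0 : ENNReal.ofReal (v x) ≠ 0 := by
        intro h0
        exact hHvt (ENNReal.rpow_eq_top_iff.2 (Or.inl ⟨h0, by linarith⟩))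
      have hw0 : ENNReal.ofReal (v x) ^ (1/p : ℝ) ≠ 0 :=
        fun h => hv0 ((ENNReal.rpow_eq_zero_iff_of_pos hp').1 h)
      have hwt : ENNReal.ofReal (v x) ^ (1/p : ℝ) ≠ ⊤ :=
        ENNReal.rpow_ne_top_of_nonneg hp'.le ENNReal.ofReal_ne_top
      have heq : G x * Hv x = ENNReal.ofReal |f x| *
          (ENNReal.ofReal (v x) ^ (1/p : ℝ) * (ENNReal.ofReal (v x) ^ (1/p : ℝ))⁻¹) := by
        simp only [hG, hHv, ENNReal.rpow_neg]
        ring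
      rw [heq, ENNReal.mul_inv_cancel hw0 hwt, mul_one]
    have havg : (volume Q)⁻¹ * (∫⁻ x in Q, ENNReal.ofReal |f x|) ≤
        2 * ENNReal.ofReal lam * ENNReal.ofReal mu := by
      have h1 : (∫⁻ x in Q, ENNReal.ofReal |f x|) ≤ ∫⁻ x in Q, G x * Hv x :=
        lintegral_mono_ae hae
      have h2 := holder_core hB hHvMeas hlam hmu hadm1 hadm2
      calc (volume Q)⁻¹ * (∫⁻ x in Q, ENNReal.ofReal |f x|)
          ≤ (volume Q)⁻¹ * (ENNReal.ofReal lam * ENNReal.ofReal mu * (2 * volume Q)) :=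
            mul_le_mul_right (le_trans h1 h2) _
      _ = 2 * ENNReal.ofReal lam * ENNReal.ofReal mu * ((volume Q)⁻¹ * volume Q) := by ring
      _ = 2 * ENNReal.ofReal lam * ENNReal.ofReal mu := by
            rw [ENNReal.inv_mul_cancel hQ0 hQt, mul_one]
    calc ((volume Q)⁻¹ * ∫⁻ x in Q, ENNReal.ofReal |f x|) * U ^ (1/p)
        ≤ (2 * ENNReal.ofReal lam * ENNReal.ofReal mu) * U ^ (1/p) :=
          mul_le_mul_left havg _
    _ = (2 * ENNReal.ofReal lam * U ^ (1/p)) * ENNReal.ofReal mu := by ring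
  calc ((volume Q)⁻¹ * ∫⁻ x in Q, ENNReal.ofReal |f x|) * U ^ (1/p)
      ≤ (2 * ENNReal.ofReal lam * U ^ (1/p)) * L2 := step
  _ = (2 * ENNReal.ofReal lam) * (U ^ (1/p) * L2) := by ring
  _ ≤ (2 * ENNReal.ofReal lam) * K := mul_le_mul_right hK _
  _ = 2 * K * ENNReal.ofReal lam := by ring

end Aux

/-- **Two-weight bump estimate for the sparse square function, `1 < p ≤ 2`:**
if `B̄ ∈ B_p`, `sup_Q ‖u^{1/p}‖_{p,Q}‖v^{-1/p}‖_{B,Q} ≤ K < ∞` and `M_{B̄}` is bounded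
on `L^p` with norm at most `N`, then `‖A_S² f‖_{L^p(u)} ≤ C K N ‖f‖_{L^p(v)}` with `C`
depending only on `p` and the sparseness constant `η`. -/
theorem stmt_14 (n : ℕ) (p η : ℝ) (hp1 : 1 < p) (hp2 : p ≤ 2) (hη : 0 < η) :
    ∃ C : ℝ, 0 < C ∧
      ∀ (ι : Type) (Qc : ι → Fin n → ℝ) (Qr : ι → ℝ), (∀ i, 0 < Qr i) →
      ∀ E : ι → Set (Fin n → ℝ),
        (∀ i, E i ⊆ Metric.closedBall (Qc i) (Qr i)) →
        (∀ i, MeasurableSet (E i)) →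
        (∀ i, ENNReal.ofReal η * volume (Metric.closedBall (Qc i) (Qr i)) ≤ volume (E i)) →
        Pairwise (Function.onFun Disjoint E) →
      ∀ B : ℝ → ℝ, IsYoung B →
        (∫⁻ t in Set.Ioi (1:ℝ), ENNReal.ofReal (youngConj B t / t ^ p / t)) ≠ ⊤ →
      ∀ u v : (Fin n → ℝ) → ℝ, (∀ x, 0 ≤ u x) → (∀ x, 0 ≤ v x) →
        Measurable u → Measurable v →
      ∀ K : ℝ≥0∞, K ≠ ⊤ →
        (∀ (c : Fin n → ℝ) (r : ℝ), 0 < r →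
          ((volume (Metric.closedBall c r))⁻¹ *
              ∫⁻ x in Metric.closedBall c r, ENNReal.ofReal (u x)) ^ (1/p) *
            luxNorm B (Metric.closedBall c r)
              (fun x => (ENNReal.ofReal (v x)) ^ (-(1/p))) ≤ K) →
      ∀ N : ℝ≥0∞,
        (∀ G : (Fin n → ℝ) → ℝ≥0∞, Measurable G →
          (∫⁻ x, (orlMax (youngConj B) G x) ^ p) ^ (1/p) ≤
            N * (∫⁻ x, (G x) ^ p) ^ (1/p)) →
      ∀ f : (Fin n → ℝ) → ℝ, Measurable f →
        (∫⁻ x, (sparseSq Qc Qr f x) ^ p * ENNReal.ofReal (u x)) ^ (1/p) ≤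
          ENNReal.ofReal C * K * N *
            (∫⁻ x, (ENNReal.ofReal |f x|) ^ p * ENNReal.ofReal (v x)) ^ (1/p) := by
  have hp0 : (0:ℝ) < p := lt_trans one_pos hp1
  have hp' : (0:ℝ) < 1/p := by positivity
  refine ⟨2 * η ^ (-(1/p)), by positivity, ?_⟩
  intro ι Qc Qr hQr E hEsub hEmeas hEvol hEdisj B hBY hBp u v hu0 hv0 hu hv K hKtop
    hK N hN f hf
  set Qb : ι → Set (Fin n → ℝ) := fun i => Metric.closedBall (Qc i) (Qr i) with hQb
  have hQbmeas : ∀ i, MeasurableSet (Qb i) := fun i => measurableSet_closedBall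
  have hQb0 : ∀ i, volume (Qb i) ≠ 0 := fun i =>
    (Metric.measure_closedBall_pos volume _ (hQr i)).ne'
  have hQbt : ∀ i, volume (Qb i) ≠ ⊤ := fun i => measure_closedBall_lt_top.ne
  have hcnt : Countable ι := by
    have hc := MeasureTheory.Measure.countable_meas_pos_of_disjoint_iUnion
      (μ := volume) hEmeas hEdisj
    have huniv : {i : ι | 0 < volume (E i)} = Set.univ := by
      refine Set.eq_univ_of_forall fun i => ?_
      refine lt_of_lt_of_le ?_ (hEvol i)
      exact ENNReal.mul_pos (ENNReal.ofReal_pos.2 hη).ne' (hQb0 i)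
    rw [huniv] at hc
    exact Set.countable_univ_iff.1 hc
  set G : (Fin n → ℝ) → ℝ≥0∞ :=
    fun x => ENNReal.ofReal |f x| * ENNReal.ofReal (v x) ^ (1/p : ℝ) with hG
  have hGmeas : Measurable G := (hf.abs.ennreal_ofReal).mul ((hv.ennreal_ofReal).pow_const _)
  set avg : ι → ℝ≥0∞ :=
    fun i => (volume (Qb i))⁻¹ * ∫⁻ y in Qb i, ENNReal.ofReal |f y| with havgdef
  set L1 : ι → ℝ≥0∞ := fun i => luxNorm (youngConj B) (Qb i) G with hL1
  set M : (Fin n → ℝ) → ℝ≥0∞ := fun x => orlMax (youngConj B) G x with hM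
  have claim1 : ∀ x, sparseSq Qc Qr f x ^ p ≤
      ∑' i, Set.indicator (Qb i) (fun _ => avg i ^ p) x := by
    intro x
    rw [sparseSq, ← ENNReal.rpow_mul]
    refine le_trans (tsum_rpow_le _ (by positivity) (by linarith)) ?_
    refine le_of_eq (tsum_congr fun i => ?_)
    by_cases hx : x ∈ Qb i
    · rw [Set.indicator_of_mem hx, Set.indicator_of_mem hx, ← ENNReal.rpow_natCast _ 2,
        ← ENNReal.rpow_mul]
      have h2p : ((2:ℕ):ℝ) * (1/2 * p) = p := by push_cast; ring
      rw [h2p]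
    · rw [Set.indicator_of_notMem hx, Set.indicator_of_notMem hx,
        ENNReal.zero_rpow_of_pos (by positivity)]
  have claim2 : (∫⁻ x, sparseSq Qc Qr f x ^ p * ENNReal.ofReal (u x)) ≤
      ∑' i, avg i ^ p * ∫⁻ x in Qb i, ENNReal.ofReal (u x) := by
    calc (∫⁻ x, sparseSq Qc Qr f x ^ p * ENNReal.ofReal (u x))
        ≤ ∫⁻ x, (∑' i, Set.indicator (Qb i) (fun _ => avg i ^ p) x) * ENNReal.ofReal (u x) :=
          lintegral_mono fun x => mul_le_mul_left (claim1 x) _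
    _ = ∫⁻ x, ∑' i, Set.indicator (Qb i) (fun _ => avg i ^ p) x * ENNReal.ofReal (u x) := by
          refine lintegral_congr fun x => ?_
          rw [ENNReal.tsum_mul_right]
    _ = ∑' i, ∫⁻ x, Set.indicator (Qb i) (fun _ => avg i ^ p) x * ENNReal.ofReal (u x) :=
          lintegral_tsum fun i =>
            ((measurable_const.indicator (hQbmeas i)).mul hu.ennreal_ofReal).aemeasurable
    _ = ∑' i, avg i ^ p * ∫⁻ x in Qb i, ENNReal.ofReal (u x) := by
          refine tsum_congr fun i => ?_
          have heq : (fun x => Set.indicator (Qb i) (fun _ => avg i ^ p) x *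
              ENNReal.ofReal (u x)) =
              fun x => Set.indicator (Qb i) (fun y => avg i ^ p * ENNReal.ofReal (u y)) x := by
            funext x
            by_cases hx : x ∈ Qb i <;> simp [hx]
          rw [heq, lintegral_indicator (hQbmeas i),
            lintegral_const_mul _ hu.ennreal_ofReal]
  have claim3 : ∀ i, avg i ^ p * (∫⁻ x in Qb i, ENNReal.ofReal (u x)) ≤
      (2:ℝ≥0∞) ^ p * K ^ p * (L1 i ^ p * volume (Qb i)) := by
    intro i
    set U : ℝ≥0∞ := ((volume (Qb i))⁻¹ * ∫⁻ x in Qb i, ENNReal.ofReal (u x)) with hU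
    have hKi := hK (Qc i) (Qr i) (hQr i)
    have hpc := percube (f := f) hBY hp0 (hQbmeas i) (hQb0 i) (hQbt i) hv hKtop hKi
    have hIu : (∫⁻ x in Qb i, ENNReal.ofReal (u x)) = U * volume (Qb i) := by
      rw [hU, mul_comm ((volume (Qb i))⁻¹) _, mul_assoc,
        ENNReal.inv_mul_cancel (hQb0 i) (hQbt i), mul_one]
    calc avg i ^ p * (∫⁻ x in Qb i, ENNReal.ofReal (u x))
        = (avg i * U ^ (1/p)) ^ p * volume (Qb i) := by
          have hpow : (avg i * U ^ (1/p)) ^ p = avg i ^ p * (U ^ (1/p)) ^ p :=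
            ENNReal.mul_rpow_of_nonneg (avg i) (U ^ (1/p)) hp0.le
          have hpow2 : (U ^ (1/p : ℝ)) ^ p = U := by
            rw [← ENNReal.rpow_mul U, one_div_mul_cancel hp0.ne', ENNReal.rpow_one]
          rw [hpow, hpow2, hIu]
          ring
    _ ≤ (2 * K * L1 i) ^ p * volume (Qb i) :=
          mul_le_mul_left (ENNReal.rpow_le_rpow hpc hp0.le) _
    _ = (2:ℝ≥0∞) ^ p * K ^ p * (L1 i ^ p * volume (Qb i)) := by
          rw [ENNReal.mul_rpow_of_nonneg _ _ hp0.le, ENNReal.mul_rpow_of_nonneg _ _ hp0.le]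
          ring
  have hη0 : ENNReal.ofReal η ≠ 0 := (ENNReal.ofReal_pos.2 hη).ne'
  have hηt : ENNReal.ofReal η ≠ ⊤ := ENNReal.ofReal_ne_top
  have claim5 : ∀ i, L1 i ^ p * volume (Qb i) ≤
      (ENNReal.ofReal η)⁻¹ * ∫⁻ x in E i, M x ^ p := by
    intro i
    have h4 : volume (Qb i) ≤ (ENNReal.ofReal η)⁻¹ * volume (E i) := by
      calc volume (Qb i) = (ENNReal.ofReal η)⁻¹ * (ENNReal.ofReal η * volume (Qb i)) := by
            rw [← mul_assoc, ENNReal.inv_mul_cancel hη0 hηt, one_mul]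
      _ ≤ (ENNReal.ofReal η)⁻¹ * volume (E i) := mul_le_mul_right (hEvol i) _
    have h5 : L1 i ^ p * volume (E i) ≤ ∫⁻ x in E i, M x ^ p := by
      calc L1 i ^ p * volume (E i) = ∫⁻ _ in E i, L1 i ^ p := (setLIntegral_const _ _).symm
      _ ≤ ∫⁻ x in E i, M x ^ p := by
          refine lintegral_mono_ae ((ae_restrict_iff' (hEmeas i)).2 (ae_of_all _ ?_))
          intro x hx
          refine ENNReal.rpow_le_rpow ?_ hp0.le
          exact le_iSup_of_le (Qc i) (le_iSup_of_le (Qr i) (le_iSup_of_le (hQr i)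
            (le_iSup_of_le (hEsub i hx) le_rfl)))
    calc L1 i ^ p * volume (Qb i)
        ≤ L1 i ^ p * ((ENNReal.ofReal η)⁻¹ * volume (E i)) := mul_le_mul_right h4 _
    _ = (ENNReal.ofReal η)⁻¹ * (L1 i ^ p * volume (E i)) := by ring
    _ ≤ (ENNReal.ofReal η)⁻¹ * ∫⁻ x in E i, M x ^ p := mul_le_mul_right h5 _
  have claim6 : (∑' i, ∫⁻ x in E i, M x ^ p) ≤ ∫⁻ x, M x ^ p := by
    rw [← lintegral_iUnion hEmeas hEdisj]
    exact setLIntegral_le_lintegral _ _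
  have claim7 : (∫⁻ x, M x ^ p) ≤ N ^ p * ∫⁻ x, G x ^ p := by
    have h2 := ENNReal.rpow_le_rpow (hN G hGmeas) hp0.le
    rw [← ENNReal.rpow_mul, one_div_mul_cancel hp0.ne', ENNReal.rpow_one,
      ENNReal.mul_rpow_of_nonneg _ _ hp0.le, ← ENNReal.rpow_mul,
      one_div_mul_cancel hp0.ne', ENNReal.rpow_one] at h2
    exact h2
  have claim8 : (∫⁻ x, G x ^ p) =
      ∫⁻ x, (ENNReal.ofReal |f x|) ^ p * ENNReal.ofReal (v x) := by
    refine lintegral_congr fun x => ?_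
    rw [hG]
    rw [ENNReal.mul_rpow_of_nonneg _ _ hp0.le, ← ENNReal.rpow_mul,
      one_div_mul_cancel hp0.ne', ENNReal.rpow_one]
  set J : ℝ≥0∞ := ∫⁻ x, (ENNReal.ofReal |f x|) ^ p * ENNReal.ofReal (v x) with hJ
  have total : (∫⁻ x, sparseSq Qc Qr f x ^ p * ENNReal.ofReal (u x)) ≤
      (2:ℝ≥0∞) ^ p * K ^ p * ((ENNReal.ofReal η)⁻¹ * (N ^ p * J)) := by
    calc (∫⁻ x, sparseSq Qc Qr f x ^ p * ENNReal.ofReal (u x))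
        ≤ ∑' i, avg i ^ p * ∫⁻ x in Qb i, ENNReal.ofReal (u x) := claim2
    _ ≤ ∑' i, (2:ℝ≥0∞) ^ p * K ^ p * (L1 i ^ p * volume (Qb i)) :=
          ENNReal.tsum_le_tsum claim3
    _ = (2:ℝ≥0∞) ^ p * K ^ p * ∑' i, (L1 i ^ p * volume (Qb i)) := ENNReal.tsum_mul_left
    _ ≤ (2:ℝ≥0∞) ^ p * K ^ p * ∑' i, ((ENNReal.ofReal η)⁻¹ * ∫⁻ x in E i, M x ^ p) :=
          mul_le_mul_right (ENNReal.tsum_le_tsum claim5) _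
    _ = (2:ℝ≥0∞) ^ p * K ^ p * ((ENNReal.ofReal η)⁻¹ * ∑' i, ∫⁻ x in E i, M x ^ p) := by
          rw [ENNReal.tsum_mul_left]
    _ ≤ (2:ℝ≥0∞) ^ p * K ^ p * ((ENNReal.ofReal η)⁻¹ * ∫⁻ x, M x ^ p) :=
          mul_le_mul_right (mul_le_mul_right claim6 _) _
    _ ≤ (2:ℝ≥0∞) ^ p * K ^ p * ((ENNReal.ofReal η)⁻¹ * (N ^ p * ∫⁻ x, G x ^ p)) :=
          mul_le_mul_right (mul_le_mul_right claim7 _) _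
    _ = (2:ℝ≥0∞) ^ p * K ^ p * ((ENNReal.ofReal η)⁻¹ * (N ^ p * J)) := by rw [claim8]
  refine le_trans (ENNReal.rpow_le_rpow total hp'.le) ?_
  have hre : (2:ℝ≥0∞) ^ p * K ^ p * ((ENNReal.ofReal η)⁻¹ * (N ^ p * J)) =
      ((2:ℝ≥0∞) ^ p * (K ^ p * ((ENNReal.ofReal η)⁻¹ * (N ^ p * J)))) := by ring
  rw [hre,
    ENNReal.mul_rpow_of_nonneg _ _ hp'.le, ENNReal.mul_rpow_of_nonneg _ _ hp'.le,
    ENNReal.mul_rpow_of_nonneg _ _ hp'.le, ENNReal.mul_rpow_of_nonneg _ _ hp'.le,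
    ← ENNReal.rpow_mul, mul_one_div_cancel hp0.ne', ENNReal.rpow_one,
    ← ENNReal.rpow_mul K, mul_one_div_cancel hp0.ne', ENNReal.rpow_one,
    ← ENNReal.rpow_mul N, mul_one_div_cancel hp0.ne', ENNReal.rpow_one,
    ENNReal.inv_rpow]
  have hC : ENNReal.ofReal (2 * η ^ (-(1/p))) = 2 * ((ENNReal.ofReal η) ^ (1/p))⁻¹ := by
    rw [ENNReal.ofReal_mul (by norm_num), ← ENNReal.rpow_neg,
      ENNReal.ofReal_rpow_of_pos hη]
    norm_num
  rw [hC]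
  refine le_of_eq ?_
  ring
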